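/- Let F be a homogeneous form of degree d ≥ 1 in n variables over ℂ. The apolar ideal F^⊥ has a minimal generator of degree d + 1 if and only if F = c·ℓ^d for some nonzero scalar c and some linear form ℓ, i.e. if and only if F has Waring rank 1. -/

import Mathlib

/-!
Apolarity setup.  `S = ℂ[x_1,…,x_n]` and its dual ring `T = ℂ[α_1,…,α_n]` are both
realized as `MvPolynomial (Fin n) ℂ`; the apolarity action `Θ ⌟ F` (`contract Θ F`)
lets `α_i` act as the partial differentiation operator `∂/∂x_i`.
-/

open MvPolynomial

noncomputable section Apolarity

/-- Partial derivatives on `ℂ[x_1,…,x_n]` commute. -/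
lemma pderiv_pderiv_comm (n : ℕ) (i j : Fin n) (f : MvPolynomial (Fin n) ℂ) :
    pderiv i (pderiv j f) = pderiv j (pderiv i f) := by
  induction f using MvPolynomial.induction_on with
  | C a => simp
  | add p q hp hq => simp [hp, hq]
  | mul_X p k hp =>
    rcases eq_or_ne i k with rfl | hik
    · rcases eq_or_ne j i with rfl | hjk
      · rfl
      · simp only [pderiv_mul, pderiv_X_self, pderiv_X_of_ne hjk, pderiv_X_of_ne hjk.symm,
          map_add, map_zero, map_one, Derivation.map_one_eq_zero, mul_one, mul_zero,
          add_zero, zero_add, hp]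
    · rcases eq_or_ne j k with rfl | hjk
      · simp only [pderiv_mul, pderiv_X_self, pderiv_X_of_ne hik, pderiv_X_of_ne hik.symm,
          map_add, map_zero, map_one, Derivation.map_one_eq_zero, mul_one, mul_zero,
          add_zero, zero_add, hp]
      · simp only [pderiv_mul, pderiv_X_of_ne hik.symm, pderiv_X_of_ne hjk.symm, map_add,
          map_zero, mul_zero, add_zero, zero_add, hp]

variable (n : ℕ)

/-- The endomorphism `∂/∂x_i` of `S = ℂ[x_1,…,x_n]`. -/
def derOp (i : Fin n) : Module.End ℂ (MvPolynomial (Fin n) ℂ) :=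
  (pderiv i).toLinearMap

lemma derOp_commute (i j : Fin n) : Commute (derOp n i) (derOp n j) :=
  LinearMap.ext fun f => pderiv_pderiv_comm n i j f

/-- The commuting product of the operators `(∂/∂x_i)^(m i)`. -/
def piDiffHom : (Fin n → Multiplicative ℕ) →* Module.End ℂ (MvPolynomial (Fin n) ℂ) :=
  MonoidHom.noncommPiCoprod (fun i : Fin n => powersHom _ (derOp n i))
    (fun i j _ x y => ((derOp_commute n i j).pow_pow x y))

/-- The differential operator `∏ i, (∂/∂x_i)^(m i)` attached to an exponent vector `m`. -/
def diffMonoidHom : Multiplicative (Fin n →₀ ℕ) →* Module.End ℂ (MvPolynomial (Fin n) ℂ) :=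
  (piDiffHom n).comp
    (AddMonoidHom.toMultiplicative
      (Finsupp.coeFnAddHom : (Fin n →₀ ℕ) →+ (Fin n → ℕ)))

/-- The apolarity action of the dual ring `T = ℂ[α_1,…,α_n]` on `S = ℂ[x_1,…,x_n]`, as an
algebra homomorphism to differential operators: `α_i` acts as `∂/∂x_i`. -/
def apolarAlgHom :
    MvPolynomial (Fin n) ℂ →ₐ[ℂ] Module.End ℂ (MvPolynomial (Fin n) ℂ) :=
  AddMonoidAlgebra.lift ℂ _ (Fin n →₀ ℕ) (diffMonoidHom n)

variable {n}

/-- The apolarity action `Θ ⌟ F`: apply to `F` the differential operator obtained from `Θ`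
by substituting `∂/∂x_i` for the `i`-th (dual) variable. -/
def contract (Θ F : MvPolynomial (Fin n) ℂ) : MvPolynomial (Fin n) ℂ :=
  apolarAlgHom n Θ F

lemma apolarAlgHom_X (i : Fin n) : apolarAlgHom n (X i) = derOp n i := by
  classical
  have hX : (X i : MvPolynomial (Fin n) ℂ)
      = AddMonoidAlgebra.single (Finsupp.single i 1) (1 : ℂ) := rfl
  rw [hX]
  rw [show apolarAlgHom n (AddMonoidAlgebra.single (Finsupp.single i 1) (1:ℂ))
      = (1:ℂ) • diffMonoidHom n (Multiplicative.ofAdd (Finsupp.single i 1)) from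
    AddMonoidAlgebra.lift_single _ _ _]
  rw [one_smul]
  rw [diffMonoidHom]
  have harg : (AddMonoidHom.toMultiplicative
        (Finsupp.coeFnAddHom : (Fin n →₀ ℕ) →+ (Fin n → ℕ)))
        (Multiplicative.ofAdd (Finsupp.single i 1))
      = Pi.mulSingle (M := fun _ : Fin n => Multiplicative ℕ) i (Multiplicative.ofAdd 1) := by
    funext j
    rcases eq_or_ne j i with rfl | hj
    · show Multiplicative.ofAdd ((Finsupp.single j 1 : Fin n →₀ ℕ) j)
        = Pi.mulSingle (M := fun _ : Fin n => Multiplicative ℕ) j (Multiplicative.ofAdd 1) j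
      rw [Finsupp.single_eq_same, Pi.mulSingle_eq_same]
    · show Multiplicative.ofAdd ((Finsupp.single i 1 : Fin n →₀ ℕ) j)
        = Pi.mulSingle (M := fun _ : Fin n => Multiplicative ℕ) i (Multiplicative.ofAdd 1) j
      rw [Finsupp.single_eq_of_ne hj, Pi.mulSingle_eq_of_ne hj]
      exact ofAdd_zero
  refine (congrArg (piDiffHom n) harg).trans ?_
  rw [piDiffHom]
  refine (MonoidHom.noncommPiCoprod_mulSingle _ _ _).trans ?_
  rfl

/-- Sanity check: the dual variable `α_i` acts on `F` as `∂F/∂x_i`. -/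
@[simp] lemma contract_X (i : Fin n) (F : MvPolynomial (Fin n) ℂ) :
    contract (X i) F = pderiv i F := by
  rw [contract, apolarAlgHom_X]; rfl

/-- The apolar (annihilator) ideal `F^⊥ = {Θ ∈ T : Θ ⌟ F = 0}` of a polynomial `F`. -/
def apolarIdeal (F : MvPolynomial (Fin n) ℂ) : Ideal (MvPolynomial (Fin n) ℂ) where
  carrier := {Θ | contract Θ F = 0}
  zero_mem' := by simp [contract]
  add_mem' := by
    intro a b ha hb
    simp only [Set.mem_setOf_eq, contract, map_add, LinearMap.add_apply] at *
    rw [ha, hb, add_zero]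
  smul_mem' := by
    intro c x hx
    simp only [Set.mem_setOf_eq, smul_eq_mul, contract, map_mul, Module.End.mul_apply] at *
    rw [hx, map_zero]

@[simp] lemma mem_apolarIdeal {Θ F : MvPolynomial (Fin n) ℂ} :
    Θ ∈ apolarIdeal F ↔ contract Θ F = 0 := Iff.rfl

variable (n)

/-- The irrelevant maximal ideal `m = ⟨α_1,…,α_n⟩` of `T`. -/
def irrIdeal : Ideal (MvPolynomial (Fin n) ℂ) :=
  Ideal.span (Set.range X)

variable {n}

/-- The homogeneous ideal `I` has a minimal generator of degree `k`, i.e. `(I/mI)_k ≠ 0`: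
there is a homogeneous element of `I` of degree `k` not belonging to `m * I`. -/
def HasMinGenOfDegree (I : Ideal (MvPolynomial (Fin n) ℂ)) (k : ℕ) : Prop :=
  ∃ Θ, Θ ∈ I ∧ Θ.IsHomogeneous k ∧ Θ ∉ irrIdeal n * I

/-- The homogeneous ideal `I` has at least `r` minimal generators of degree `k`, i.e.
`dim_ℂ (I/mI)_k ≥ r`: there are `r` homogeneous degree-`k` elements of `I` that are
linearly independent modulo `m * I`. -/
def MinGensAtLeast (I : Ideal (MvPolynomial (Fin n) ℂ)) (k r : ℕ) : Prop :=
  ∃ Θ : Fin r → MvPolynomial (Fin n) ℂ,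
    (∀ i, Θ i ∈ I ∧ (Θ i).IsHomogeneous k) ∧
    ∀ c : Fin r → ℂ, (∑ i, c i • Θ i) ∈ irrIdeal n * I → ∀ i, c i = 0

/-- `F` is an `s`-fold direct sum of degree `d`: `F = F_1 + ⋯ + F_s` where the `F_i` are
nonzero degree-`d` forms in independent subspaces `V_i` of the space of linear forms with
`V = V_1 ⊕ ⋯ ⊕ V_s` (i.e. in disjoint sets of variables, up to linear change of variables;
`F_i ∈ S^d V_i` is expressed as membership in the subalgebra generated by `V_i`). -/
def IsSFoldDirectSum (F : MvPolynomial (Fin n) ℂ) (d s : ℕ) : Prop :=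
  ∃ (V : Fin s → Submodule ℂ (MvPolynomial (Fin n) ℂ))
    (G : Fin s → MvPolynomial (Fin n) ℂ),
    (∀ i, V i ≤ homogeneousSubmodule (Fin n) ℂ 1) ∧
    iSupIndep V ∧
    (⨆ i, V i) = homogeneousSubmodule (Fin n) ℂ 1 ∧
    (∀ i, G i ≠ 0 ∧ (G i).IsHomogeneous d ∧ G i ∈ Algebra.adjoin ℂ (V i : Set _)) ∧
    F = ∑ i, G i

/-- `F` is a direct sum: `F = F₁ + F₂` with `F₁ ∈ S^d V₁`, `F₂ ∈ S^d V₂` nonzero and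
`V = V₁ ⊕ V₂`. -/
def IsDirectSum (F : MvPolynomial (Fin n) ℂ) (d : ℕ) : Prop :=
  IsSFoldDirectSum F d 2

/-- `F` is a limit (as `t → 0`) of `s`-fold direct sums of degree `d`. -/
def IsLimitOfSFoldDirectSums (F : MvPolynomial (Fin n) ℂ) (d s : ℕ) : Prop :=
  ∃ G : ℂ → MvPolynomial (Fin n) ℂ,
    (∀ t : ℂ, t ≠ 0 → IsSFoldDirectSum (G t) d s) ∧
    ∀ m : Fin n →₀ ℕ,
      Filter.Tendsto (fun t => MvPolynomial.coeff m (G t))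
        (nhdsWithin (0 : ℂ) {(0 : ℂ)}ᶜ) (nhds (MvPolynomial.coeff m F))

/-- `F` is a limit of direct sums. -/
def IsLimitOfDirectSums (F : MvPolynomial (Fin n) ℂ) (d : ℕ) : Prop :=
  IsLimitOfSFoldDirectSums F d 2

/-- `F` is concise: `(F^⊥)_1 = 0`, i.e. `F` cannot be written using fewer variables. -/
def Concise (F : MvPolynomial (Fin n) ℂ) : Prop :=
  ∀ Θ : MvPolynomial (Fin n) ℂ, Θ.IsHomogeneous 1 → contract Θ F = 0 → Θ = 0

end Apolarity

noncomputable section ApolarityLemmas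
open MvPolynomial

variable {n : ℕ}

@[simp] lemma contract_C (a : ℂ) (F : MvPolynomial (Fin n) ℂ) :
    contract (C a) F = a • F := by
  have h : apolarAlgHom n (C a) = algebraMap ℂ _ a := by
    simpa using (apolarAlgHom n).commutes a
  simp [contract, h, Module.algebraMap_end_apply]

@[simp] lemma contract_one (F : MvPolynomial (Fin n) ℂ) : contract 1 F = F := by
  simpa using contract_C 1 F

lemma contract_mul (p q F : MvPolynomial (Fin n) ℂ) :
    contract (p * q) F = contract p (contract q F) := by
  simp [contract, map_mul]

lemma contract_add_left (p q F : MvPolynomial (Fin n) ℂ) :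
    contract (p + q) F = contract p F + contract q F := by
  simp [contract, map_add]

lemma contract_smul_left (a : ℂ) (p F : MvPolynomial (Fin n) ℂ) :
    contract (a • p) F = a • contract p F := by
  simp [contract, map_smul]

lemma contract_add_right (p F G : MvPolynomial (Fin n) ℂ) :
    contract p (F + G) = contract p F + contract p G := map_add _ _ _

lemma contract_smul_right (a : ℂ) (p F : MvPolynomial (Fin n) ℂ) :
    contract p (a • F) = a • contract p F := map_smul _ _ _

lemma contract_sub_right (p F G : MvPolynomial (Fin n) ℂ) :
    contract p (F - G) = contract p F - contract p G := map_sub _ _ _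

lemma contract_sub_left (p q F : MvPolynomial (Fin n) ℂ) :
    contract (p - q) F = contract p F - contract q F := by
  simp [contract, map_sub]

@[simp] lemma contract_zero_right (p : MvPolynomial (Fin n) ℂ) : contract p 0 = 0 :=
  map_zero _

end ApolarityLemmas
noncomputable section ApolarityLemmas2
open MvPolynomial

variable {n : ℕ}

lemma weight_one_single (i : Fin n) :
    (Finsupp.weight 1) (Finsupp.single i 1) = 1 := by
  rw [Finsupp.weight_apply, Finsupp.sum_single_index] <;> simp

lemma weight_one_eq_zero {m : Fin n →₀ ℕ} (h : (Finsupp.weight 1) m = 0) : m = 0 := by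
  by_contra hm
  obtain ⟨s, hs⟩ : ∃ s, m s ≠ 0 := by
    by_contra h'
    push_neg at h'
    exact hm (Finsupp.ext h')
  have := Finsupp.le_weight_of_ne_zero' (w := (1 : Fin n → ℕ)) hs
  rw [h] at this
  simp at this

lemma coeff_pderiv' (i : Fin n) (m : Fin n →₀ ℕ) (p : MvPolynomial (Fin n) ℂ) :
    coeff m (pderiv i p) = (m i + 1 : ℂ) * coeff (m + Finsupp.single i 1) p := by
  induction p using MvPolynomial.induction_on' with
  | monomial s a =>
    rw [pderiv_monomial]
    rcases eq_or_ne s (m + Finsupp.single i 1) with rfl | hs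
    · rw [coeff_monomial, if_pos, coeff_monomial, if_pos rfl]
      · push_cast
        simp [mul_comm]
      · ext j
        rcases eq_or_ne j i with rfl | hj
        · simp [Finsupp.single_apply]
        · simp [Finsupp.single_apply, hj]
    · rw [coeff_monomial, coeff_monomial, if_neg hs]
      rcases eq_or_ne (s i) 0 with h0 | h0
      · rcases eq_or_ne (s - Finsupp.single i 1) m with heq | hne
        · simp [if_pos heq, h0]
        · simp [if_neg hne]
      · have : s - Finsupp.single i 1 ≠ m := by
          intro heq
          apply hs
          rw [← heq]
          ext j
          rcases eq_or_ne j i with rfl | hj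
          · simp [Finsupp.single_apply, Nat.sub_add_cancel (Nat.one_le_iff_ne_zero.2 h0)]
          · simp [Finsupp.single_apply, hj.symm, hj]
        simp [if_neg this, mul_zero]
  | add p q hp hq => simp [hp, hq, mul_add]

lemma IsHomogeneous.pderiv' {F : MvPolynomial (Fin n) ℂ} {m : ℕ} (hF : F.IsHomogeneous m)
    (i : Fin n) : (pderiv i F).IsHomogeneous (m - 1) := by
  intro e he
  rw [coeff_pderiv'] at he
  have h2 : coeff (e + Finsupp.single i 1) F ≠ 0 := by
    intro h; rw [h, mul_zero] at he; exact he rfl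
  have := hF h2
  rw [map_add, weight_one_single] at this
  omega

/-- Homogeneous of degree 0 means constant. -/
lemma IsHomogeneous.eq_C_constantCoeff' {F : MvPolynomial (Fin n) ℂ}
    (hF : F.IsHomogeneous 0) : F = C (constantCoeff F) := by
  ext m
  rcases eq_or_ne m 0 with rfl | hm
  · simp [constantCoeff_eq]
  · rw [coeff_C, if_neg (Ne.symm hm)]
    by_contra h
    exact hm (weight_one_eq_zero (hF h))

end ApolarityLemmas2
noncomputable section ApolarityLemmas3
open MvPolynomial

variable {n : ℕ}

lemma sub_single_add_cancel {e : Fin n →₀ ℕ} {i : Fin n} (h : e i ≠ 0) :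
    e - Finsupp.single i 1 + Finsupp.single i 1 = e := by
  ext j
  rcases eq_or_ne j i with rfl | hj
  · simp [Finsupp.single_apply, Nat.sub_add_cancel (Nat.one_le_iff_ne_zero.2 h)]
  · simp [Finsupp.single_apply, hj.symm, hj]

lemma contract_monomial_succ (e : Fin n →₀ ℕ) (i : Fin n) (c : ℂ)
    (F : MvPolynomial (Fin n) ℂ) :
    contract (monomial (e + Finsupp.single i 1) c) F
      = contract (monomial e c) (pderiv i F) := by
  have : monomial (e + Finsupp.single i 1) c = monomial e c * X i := by
    rw [X, monomial_mul, mul_one]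
  rw [this, contract_mul]
  simp

lemma contract_monomial_isHomogeneous_aux (k : ℕ) :
    ∀ (e : Fin n →₀ ℕ), (Finsupp.weight 1) e = k → ∀ (c : ℂ) (F : MvPolynomial (Fin n) ℂ)
      (m : ℕ), F.IsHomogeneous m →
      (contract (monomial e c) F).IsHomogeneous (m - k) ∧
        (m < k → contract (monomial e c) F = 0) := by
  induction k with
  | zero =>
    intro e he c F m hF
    rw [weight_one_eq_zero he]
    have : (monomial (0 : Fin n →₀ ℕ) c) = C c := by simp
    rw [this, contract_C]
    refine ⟨?_, by omega⟩
    simpa using (homogeneousSubmodule (Fin n) ℂ m).smul_mem c hF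
  | succ k ih =>
    intro e he c F m hF
    have hne : e ≠ 0 := by
      intro h; rw [h] at he; simp at he
    obtain ⟨i, hi⟩ : ∃ i, e i ≠ 0 := by
      by_contra h'; push_neg at h'; exact hne (Finsupp.ext h')
    have hdec : e - Finsupp.single i 1 + Finsupp.single i 1 = e := sub_single_add_cancel hi
    have hw : (Finsupp.weight 1) (e - Finsupp.single i 1) = k := by
      have := congrArg (Finsupp.weight (1 : Fin n → ℕ)) hdec
      rw [map_add, weight_one_single, he] at this
      omega
    rw [← hdec, contract_monomial_succ]
    rcases eq_or_ne m 0 with rfl | hm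
    · have : pderiv i F = 0 := by
        rw [IsHomogeneous.eq_C_constantCoeff' hF, pderiv_C]
      rw [this, contract_zero_right]
      exact ⟨fun _ h => by simp at h, fun _ => rfl⟩
    · have hD := IsHomogeneous.pderiv' hF i
      obtain ⟨h1, h2⟩ := ih _ hw c (pderiv i F) (m - 1) hD
      constructor
      · have : m - 1 - k = m - (k + 1) := by omega
        rwa [this] at h1
      · intro hlt
        exact h2 (by omega)

lemma contract_sum_left {α : Type*} (s : Finset α) (f : α → MvPolynomial (Fin n) ℂ)
    (F : MvPolynomial (Fin n) ℂ) :
    contract (∑ x ∈ s, f x) F = ∑ x ∈ s, contract (f x) F := by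
  unfold contract
  rw [map_sum]
  exact LinearMap.sum_apply _ _ _

lemma isHom_contract {Θ F : MvPolynomial (Fin n) ℂ} {k m : ℕ}
    (hΘ : Θ.IsHomogeneous k) (hF : F.IsHomogeneous m) :
    (contract Θ F).IsHomogeneous (m - k) := by
  conv_lhs => rw [← Θ.support_sum_monomial_coeff]
  rw [contract_sum_left]
  apply IsHomogeneous.sum
  intro e he
  exact (contract_monomial_isHomogeneous_aux k e (hΘ (mem_support_iff.1 he)) _ F m hF).1

lemma contract_eq_zero_of_lt {Θ F : MvPolynomial (Fin n) ℂ} {k m : ℕ}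
    (hΘ : Θ.IsHomogeneous k) (hF : F.IsHomogeneous m) (h : m < k) :
    contract Θ F = 0 := by
  conv_lhs => rw [← Θ.support_sum_monomial_coeff]
  rw [contract_sum_left]
  apply Finset.sum_eq_zero
  intro e he
  exact (contract_monomial_isHomogeneous_aux k e (hΘ (mem_support_iff.1 he)) _ F m hF).2 h

end ApolarityLemmas3
noncomputable section ApolarityLemmas4
open MvPolynomial

variable {n : ℕ}

lemma constantCoeff_contract_monomial (k : ℕ) :
    ∀ (m : Fin n →₀ ℕ), (Finsupp.weight 1) m = k → ∀ (P : MvPolynomial (Fin n) ℂ),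
      constantCoeff (contract (monomial m 1) P)
        = (∏ i : Fin n, Nat.factorial (m i) : ℕ) * coeff m P := by
  induction k with
  | zero =>
    intro m hm P
    rw [weight_one_eq_zero hm]
    have h1 : (monomial (0 : Fin n →₀ ℕ) (1 : ℂ)) = 1 := by simp
    simp [h1, constantCoeff_eq]
  | succ k ih =>
    intro m hm P
    have hne : m ≠ 0 := by intro h; rw [h] at hm; simp at hm
    obtain ⟨i, hi⟩ : ∃ i, m i ≠ 0 := by
      by_contra h'; push_neg at h'; exact hne (Finsupp.ext h')
    have hdec : m - Finsupp.single i 1 + Finsupp.single i 1 = m := sub_single_add_cancel hi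
    set m' := m - Finsupp.single i 1 with hm'
    have hw : (Finsupp.weight 1) m' = k := by
      have := congrArg (Finsupp.weight (1 : Fin n → ℕ)) hdec
      rw [map_add, weight_one_single, hm] at this
      omega
    have hprod : (∏ j : Fin n, Nat.factorial (m j))
        = (∏ j : Fin n, Nat.factorial (m' j)) * (m' i + 1) := by
      have hstep : ∀ j, Nat.factorial (m j)
          = Nat.factorial (m' j) * (if j = i then m' i + 1 else 1) := by
        intro j
        rcases eq_or_ne j i with rfl | hj
        · have : m j = m' j + 1 := by
            have := congrFun (congrArg (fun f : Fin n →₀ ℕ => (f : Fin n → ℕ)) hdec) j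
            simp [Finsupp.single_apply] at this
            omega
          rw [if_pos rfl, this, Nat.factorial_succ, mul_comm]
        · have : m j = m' j := by
            have := congrFun (congrArg (fun f : Fin n →₀ ℕ => (f : Fin n → ℕ)) hdec) j
            simp only [Finsupp.coe_add, Pi.add_apply, Finsupp.single_apply,
              if_neg (Ne.symm hj)] at this
            omega
          rw [if_neg hj, this, mul_one]
      rw [Finset.prod_congr rfl (fun j _ => hstep j), Finset.prod_mul_distrib]
      congr 1
      simp
    rw [← hdec, contract_monomial_succ, ih m' hw (pderiv i P), coeff_pderiv', hdec]
    rw [hprod]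
    push_cast
    ring
lemma homog_eq_zero_of_pairing (k : ℕ) (P : MvPolynomial (Fin n) ℂ) (hP : P.IsHomogeneous k)
    (h : ∀ Θ : MvPolynomial (Fin n) ℂ, Θ.IsHomogeneous k →
      constantCoeff (contract Θ P) = 0) : P = 0 := by
  ext m
  rcases eq_or_ne ((Finsupp.weight 1) m) k with hw | hw
  · have hΘ : (monomial m (1 : ℂ)).IsHomogeneous k := by
      apply isHomogeneous_monomial
      rw [show (Finsupp.degree m) = (Finsupp.weight 1) m from DFunLike.congr_fun Finsupp.degree_eq_weight_one m]
      exact hw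
    have := h _ hΘ
    rw [constantCoeff_contract_monomial k m hw P] at this
    have hfac : ((∏ i : Fin n, Nat.factorial (m i) : ℕ) : ℂ) ≠ 0 := by
      rw [Nat.cast_ne_zero]
      exact Finset.prod_ne_zero_iff.2 fun i _ => Nat.factorial_ne_zero _
    rw [coeff_zero]
    exact (mul_eq_zero.mp this).resolve_left hfac
  · rw [coeff_zero]
    by_contra hc
    exact hw (hP hc)

/-- For `Θ, F` homogeneous of the same degree, the contraction is the constant given by the
apolar pairing. -/
lemma contract_eq_C_pairing {Θ F : MvPolynomial (Fin n) ℂ} {d : ℕ}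
    (hΘ : Θ.IsHomogeneous d) (hF : F.IsHomogeneous d) :
    contract Θ F = C (constantCoeff (contract Θ F)) := by
  have := isHom_contract hΘ hF
  rw [Nat.sub_self] at this
  exact IsHomogeneous.eq_C_constantCoeff' this

end ApolarityLemmas4
noncomputable section ApolarityLemmas5
open MvPolynomial

variable {n : ℕ}

lemma weight_one_eq_sum (m : Fin n →₀ ℕ) :
    (Finsupp.weight 1) m = ∑ i : Fin n, m i := by
  rw [Finsupp.weight_apply, Finsupp.sum_fintype]
  · simp
  · intro i; simp

lemma euler_monomial (m : Fin n →₀ ℕ) (c : ℂ) :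
    ∑ i : Fin n, X i * pderiv i (monomial m c)
      = ((Finsupp.weight (1 : Fin n → ℕ)) m) • monomial m c := by
  have hterm : ∀ i : Fin n, X i * pderiv i (monomial m c) = (m i) • monomial m c := by
    intro i
    rw [pderiv_monomial]
    rcases eq_or_ne (m i) 0 with h0 | h0
    · simp [h0]
    · rw [X, monomial_mul, one_mul]
      rw [show Finsupp.single i 1 + (m - Finsupp.single i 1) = m by
        rw [add_comm]; exact sub_single_add_cancel h0]
      rw [smul_monomial]
      congr 1
      rw [nsmul_eq_mul, mul_comm]
  rw [Finset.sum_congr rfl (fun i _ => hterm i), ← Finset.sum_smul, weight_one_eq_sum]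

lemma euler {F : MvPolynomial (Fin n) ℂ} {d : ℕ} (hF : F.IsHomogeneous d) :
    ∑ i : Fin n, X i * pderiv i F = d • F := by
  have h1 : ∑ i : Fin n, X i * pderiv i F
      = ∑ m ∈ F.support, ((Finsupp.weight (1 : Fin n → ℕ)) m) • monomial m (coeff m F) := by
    conv_lhs => rw [← F.support_sum_monomial_coeff]
    have hswap : ∀ i : Fin n, X i * pderiv i (∑ m ∈ F.support, monomial m (coeff m F))
        = ∑ m ∈ F.support, X i * pderiv i (monomial m (coeff m F)) := by
      intro i; rw [map_sum, Finset.mul_sum]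
    rw [Finset.sum_congr rfl fun i _ => hswap i, Finset.sum_comm]
    exact Finset.sum_congr rfl fun m _ => euler_monomial m _
  rw [h1]
  conv_rhs => rw [← F.support_sum_monomial_coeff]
  rw [Finset.smul_sum]
  exact Finset.sum_congr rfl fun m hm => by rw [hF (mem_support_iff.1 hm)]

lemma pderiv_of_isHomogeneous_one {ℓ : MvPolynomial (Fin n) ℂ} (hℓ : ℓ.IsHomogeneous 1)
    (i : Fin n) : pderiv i ℓ = C (coeff (Finsupp.single i 1) ℓ) := by
  have h0 : (pderiv i ℓ).IsHomogeneous 0 := by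
    simpa using IsHomogeneous.pderiv' hℓ i
  rw [IsHomogeneous.eq_C_constantCoeff' h0]
  congr 1
  rw [constantCoeff_eq, coeff_pderiv']
  simp

lemma weight_one_eq_one_iff {m : Fin n →₀ ℕ} (h : (Finsupp.weight 1) m = 1) :
    ∃ i, m = Finsupp.single i 1 := by
  have hne : m ≠ 0 := by intro h0; rw [h0] at h; simp at h
  obtain ⟨i, hi⟩ : ∃ i, m i ≠ 0 := by
    by_contra h'; push_neg at h'; exact hne (Finsupp.ext h')
  have hdec := sub_single_add_cancel hi
  have hw : (Finsupp.weight 1) (m - Finsupp.single i 1) = 0 := by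
    have := congrArg (Finsupp.weight (1 : Fin n → ℕ)) hdec
    rw [map_add, weight_one_single, h] at this
    omega
  refine ⟨i, ?_⟩
  rw [← hdec, weight_one_eq_zero hw, zero_add]

lemma exists_single_coeff_ne_zero {ℓ : MvPolynomial (Fin n) ℂ} (hℓ : ℓ.IsHomogeneous 1)
    (h : ℓ ≠ 0) : ∃ i, coeff (Finsupp.single i 1) ℓ ≠ 0 := by
  obtain ⟨m, hm⟩ := ne_zero_iff.1 h
  obtain ⟨i, rfl⟩ := weight_one_eq_one_iff (hℓ hm)
  exact ⟨i, hm⟩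

lemma mem_irrIdeal_iff {β : MvPolynomial (Fin n) ℂ} :
    β ∈ irrIdeal n ↔ constantCoeff β = 0 := by
  constructor
  · intro hβ
    have hle : irrIdeal n ≤ RingHom.ker (constantCoeff (R := ℂ) (σ := Fin n)) := by
      rw [irrIdeal, Ideal.span_le]
      rintro x ⟨i, rfl⟩
      simp [RingHom.mem_ker]
    exact hle hβ
  · intro hβ
    rw [irrIdeal, ← Set.image_univ]
    rw [mem_ideal_span_X_image]
    intro m hm
    have hm0 : m ≠ 0 := by
      intro h0
      rw [mem_support_iff, h0, ← constantCoeff_eq] at hm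
      exact hm hβ
    obtain ⟨i, hi⟩ : ∃ i, m i ≠ 0 := by
      by_contra h'; push_neg at h'; exact hm0 (Finsupp.ext h')
    exact ⟨i, Set.mem_univ i, hi⟩

end ApolarityLemmas5
noncomputable section ApolarityLemmas6
open MvPolynomial

variable {n : ℕ}

lemma key_power (ℓ : MvPolynomial (Fin n) ℂ) (hℓ1 : ℓ.IsHomogeneous 1) (hℓ : ℓ ≠ 0) :
    ∀ (e : ℕ) (F : MvPolynomial (Fin n) ℂ), F ≠ 0 → F.IsHomogeneous e →
      (∀ i, ∃ μ : ℂ, ℓ * pderiv i F = C μ * F) →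
      ∃ c : ℂ, c ≠ 0 ∧ F = c • ℓ ^ e := by
  intro e
  induction e with
  | zero =>
    intro F hF0 hF _
    refine ⟨constantCoeff F, ?_, ?_⟩
    · intro h
      apply hF0
      rw [IsHomogeneous.eq_C_constantCoeff' hF, h, map_zero]
    · rw [pow_zero, smul_eq_C_mul, mul_one]
      exact IsHomogeneous.eq_C_constantCoeff' hF
  | succ e ih =>
    intro F hF0 hF hyp
    obtain ⟨i, hi⟩ : ∃ i, pderiv i F ≠ 0 := by
      by_contra h'
      push_neg at h'
      have h0 : ((e + 1 : ℕ) : ℂ) • F = 0 := by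
        rw [Nat.cast_smul_eq_nsmul, ← euler hF]
        exact Finset.sum_eq_zero fun j _ => by rw [h' j, mul_zero]
      rcases smul_eq_zero.mp h0 with h | h
      · exact (Nat.cast_ne_zero.2 (Nat.succ_ne_zero e)) h
      · exact hF0 h
    obtain ⟨μ, hμ⟩ := hyp i
    have hμ0 : μ ≠ 0 := by
      intro h
      rw [h, map_zero, zero_mul] at hμ
      exact mul_ne_zero hℓ hi hμ
    set H : MvPolynomial (Fin n) ℂ := C μ⁻¹ * pderiv i F with hH
    have hcc : C μ⁻¹ * C μ = (1 : MvPolynomial (Fin n) ℂ) := by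
      rw [← map_mul, inv_mul_cancel₀ hμ0, map_one]
    have hFlH : F = ℓ * H := by
      rw [hH]
      linear_combination (-(C μ⁻¹) : MvPolynomial (Fin n) ℂ) * hμ - F * hcc
    have hH0 : H ≠ 0 := by
      intro h
      rw [h, mul_zero] at hFlH
      exact hF0 hFlH
    have hHhom : H.IsHomogeneous e := by
      have := (isHomogeneous_C (Fin n) (μ⁻¹)).mul (IsHomogeneous.pderiv' hF i)
      simpa using this
    have hypH : ∀ j, ∃ ν : ℂ, ℓ * pderiv j H = C ν * H := by
      intro j
      obtain ⟨ν, hν⟩ := hyp j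
      refine ⟨ν - coeff (Finsupp.single j 1) ℓ, ?_⟩
      rw [hFlH] at hν
      have hd2 : pderiv j (ℓ * H) = C (coeff (Finsupp.single j 1) ℓ) * H + ℓ * pderiv j H := by
        rw [pderiv_mul, pderiv_of_isHomogeneous_one hℓ1]
      rw [hd2] at hν
      apply mul_left_cancel₀ hℓ
      rw [map_sub]
      linear_combination hν
    obtain ⟨c, hc0, hc⟩ := ih H hH0 hHhom hypH
    refine ⟨c, hc0, ?_⟩
    rw [hFlH, hc, mul_smul_comm, ← pow_succ']

end ApolarityLemmas6
noncomputable section ApolarityLemmas7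
open MvPolynomial

variable {n : ℕ}

instance homogFinDim (k : ℕ) : FiniteDimensional ℂ (homogeneousSubmodule (Fin n) ℂ k) := by
  apply Submodule.finiteDimensional_of_le (S₂ := restrictDegree (Fin n) ℂ k)
  refine le_trans ?_ (restrictTotalDegree_le_restrictDegree (σ := Fin n) (R := ℂ) k)
  intro p hp
  rw [mem_restrictTotalDegree]
  exact IsHomogeneous.totalDegree_le hp

/-- The apolar pairing, as a map to the dual of the space of homogeneous polynomials. -/
def pairDual (k : ℕ) : homogeneousSubmodule (Fin n) ℂ k →ₗ[ℂ]
    Module.Dual ℂ (homogeneousSubmodule (Fin n) ℂ k) where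
  toFun G :=
    { toFun := fun Θ => constantCoeff (contract Θ.1 G.1)
      map_add' := fun a b => by simp [contract_add_left]
      map_smul' := fun c a => by simp [contract_smul_left] }
  map_add' a b := by
    ext Θ
    simp [contract_add_right]
  map_smul' c a := by
    ext Θ
    simp [contract_smul_right]

lemma pairDual_injective (k : ℕ) :
    Function.Injective (pairDual (n := n) k) := by
  intro G H hGH
  apply Subtype.ext
  have hz : G.1 - H.1 = 0 := by
    apply homog_eq_zero_of_pairing k _ ((homogeneousSubmodule (Fin n) ℂ k).sub_mem G.2 H.2)
    intro Θ hΘ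
    have h1 := congrFun (congrArg DFunLike.coe hGH) ⟨Θ, hΘ⟩
    simp only [pairDual, LinearMap.coe_mk, AddHom.coe_mk] at h1
    rw [show G.1 - H.1 = G.1 + (-1 : ℂ) • H.1 by module, contract_add_right,
      contract_smul_right, map_add, constantCoeff_smul, h1]
    simp
  exact sub_eq_zero.mp hz

lemma exists_pairing_rep (k : ℕ) (f : MvPolynomial (Fin n) ℂ →ₗ[ℂ] ℂ) :
    ∃ G : MvPolynomial (Fin n) ℂ, G.IsHomogeneous k ∧
      ∀ Θ : MvPolynomial (Fin n) ℂ, Θ.IsHomogeneous k →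
        constantCoeff (contract Θ G) = f Θ := by
  have hsurj : Function.Surjective (pairDual (n := n) k) := by
    rw [← LinearMap.injective_iff_surjective_of_finrank_eq_finrank
      (Subspace.dual_finrank_eq (V := homogeneousSubmodule (Fin n) ℂ k)).symm]
    exact pairDual_injective k
  obtain ⟨G, hG⟩ := hsurj (f.comp (homogeneousSubmodule (Fin n) ℂ k).subtype)
  refine ⟨G.1, G.2, fun Θ hΘ => ?_⟩
  have := congrFun (congrArg DFunLike.coe hG) ⟨Θ, hΘ⟩
  exact this

lemma exists_functional {M : Type*} [AddCommGroup M] [Module ℂ M] (W : Submodule ℂ M)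
    {x : M} (hx : x ∉ W) :
    ∃ f : M →ₗ[ℂ] ℂ, (∀ w ∈ W, f w = 0) ∧ f x ≠ 0 := by
  have hy : (Submodule.Quotient.mk x : M ⧸ W) ≠ 0 := by
    intro h
    exact hx ((Submodule.Quotient.mk_eq_zero W).1 h)
  obtain ⟨φ, hφ⟩ : ∃ φ : Module.Dual ℂ (M ⧸ W), φ (Submodule.Quotient.mk x) ≠ 0 := by
    by_contra h
    push_neg at h
    exact hy ((Module.forall_dual_apply_eq_zero_iff ℂ _).1 h)
  refine ⟨φ.comp W.mkQ, fun w hw => ?_, hφ⟩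
  have : W.mkQ w = 0 := by
    rw [Submodule.mkQ_apply]
    exact (Submodule.Quotient.mk_eq_zero W).2 hw
  simp [this]

end ApolarityLemmas7
noncomputable section ApolarityLemmas8
open MvPolynomial

variable {n : ℕ}

@[simp] lemma contract_zero_left (F : MvPolynomial (Fin n) ℂ) : contract 0 F = 0 := by
  simp [contract, map_zero]

lemma contract_C_mul_right (b : ℂ) (Θ P : MvPolynomial (Fin n) ℂ) :
    contract Θ (C b * P) = b • contract Θ P := by
  rw [← smul_eq_C_mul, contract_smul_right]

lemma pderiv_pow_linear {ℓ : MvPolynomial (Fin n) ℂ} (hℓ : ℓ.IsHomogeneous 1) (i : Fin n)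
    (N : ℕ) :
    pderiv i (ℓ ^ N) = C ((N : ℂ) * coeff (Finsupp.single i 1) ℓ) * ℓ ^ (N - 1) := by
  rw [pderiv_pow, pderiv_of_isHomogeneous_one hℓ i, map_mul]
  rw [show ((N : MvPolynomial (Fin n) ℂ)) = C (N : ℂ) from by simp]
  ring

lemma contract_monomial_pow_linear {ℓ : MvPolynomial (Fin n) ℂ} (hℓ : ℓ.IsHomogeneous 1)
    (k : ℕ) :
    ∀ (e : Fin n →₀ ℕ), (Finsupp.weight 1) e = k → ∀ (N : ℕ), k ≤ N → ∀ (c : ℂ),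
      contract (monomial e c) (ℓ ^ N)
        = (N.descFactorial k : ℂ) •
            (eval (fun i => coeff (Finsupp.single i 1) ℓ) (monomial e c)) • ℓ ^ (N - k) := by
  induction k with
  | zero =>
    intro e he N _ c
    rw [weight_one_eq_zero he]
    have h1 : (monomial (0 : Fin n →₀ ℕ) c) = C c := by simp
    rw [h1, contract_C]
    simp
  | succ k ih =>
    intro e he N hkN c
    have hne : e ≠ 0 := by intro h; rw [h] at he; simp at he
    obtain ⟨i, hi⟩ : ∃ i, e i ≠ 0 := by
      by_contra h'; push_neg at h'; exact hne (Finsupp.ext h')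
    have hdec : e - Finsupp.single i 1 + Finsupp.single i 1 = e := sub_single_add_cancel hi
    set e' := e - Finsupp.single i 1 with he'
    have hw : (Finsupp.weight 1) e' = k := by
      have := congrArg (Finsupp.weight (1 : Fin n → ℕ)) hdec
      rw [map_add, weight_one_single, he] at this
      omega
    rw [← hdec, contract_monomial_succ, pderiv_pow_linear hℓ, contract_C_mul_right,
      ih e' hw (N - 1) (by omega) c]
    have hN1 : N - 1 - k = N - (k + 1) := by omega
    have hdesc : (N.descFactorial (k + 1) : ℂ)
        = (N : ℂ) * ((N - 1).descFactorial k : ℂ) := by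
      have hN : N = (N - 1) + 1 := by omega
      rw [hN, Nat.succ_descFactorial_succ]
      push_cast
      ring
    have heval : eval (fun i => coeff (Finsupp.single i 1) ℓ) (monomial (e' + Finsupp.single i 1) c)
        = eval (fun i => coeff (Finsupp.single i 1) ℓ) (monomial e' c)
            * coeff (Finsupp.single i 1) ℓ := by
      rw [show monomial (e' + Finsupp.single i 1) c = monomial e' c * X i by
        rw [X, monomial_mul, mul_one]]
      rw [map_mul, eval_X]
    rw [hN1, hdesc, heval]
    rw [smul_smul, smul_smul, smul_smul]
    congr 1
    ring

lemma contract_homog_pow_linear {ℓ : MvPolynomial (Fin n) ℂ} (hℓ : ℓ.IsHomogeneous 1)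
    {k N : ℕ} (hkN : k ≤ N) {Θ : MvPolynomial (Fin n) ℂ} (hΘ : Θ.IsHomogeneous k) :
    contract Θ (ℓ ^ N)
      = (N.descFactorial k : ℂ) •
          (eval (fun i => coeff (Finsupp.single i 1) ℓ) Θ) • ℓ ^ (N - k) := by
  conv_lhs => rw [← Θ.support_sum_monomial_coeff]
  rw [contract_sum_left]
  rw [Finset.sum_congr rfl (fun e heΘ =>
    contract_monomial_pow_linear hℓ k e (hΘ (mem_support_iff.1 heΘ)) N hkN (coeff e Θ))]
  have hev : eval (fun i => coeff (Finsupp.single i 1) ℓ) Θ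
      = ∑ e ∈ Θ.support, eval (fun i => coeff (Finsupp.single i 1) ℓ)
          (monomial e (coeff e Θ)) := by
    conv_lhs => rw [← Θ.support_sum_monomial_coeff]
    rw [map_sum]
  rw [hev, Finset.sum_smul, Finset.smul_sum]

@[simp] lemma contract_one_right (β : MvPolynomial (Fin n) ℂ) :
    contract β 1 = C (constantCoeff β) := by
  induction β using MvPolynomial.induction_on with
  | C a => rw [contract_C, constantCoeff_C, smul_eq_C_mul, mul_one]
  | add p q hp hq => rw [contract_add_left, hp, hq, map_add, map_add]
  | mul_X p i hp =>
    rw [contract_mul, contract_X, pderiv_one, contract_zero_right]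
    rw [map_mul, constantCoeff_X, mul_zero, map_zero]

end ApolarityLemmas8
noncomputable section ApolarityLemmas9
open MvPolynomial

variable {n : ℕ}

lemma homogeneousComponent_contract_eq_zero {F : MvPolynomial (Fin n) ℂ} {d : ℕ}
    (hF : F.IsHomogeneous d) {h : MvPolynomial (Fin n) ℂ} (hh : contract h F = 0) (k : ℕ) :
    contract (homogeneousComponent k h) F = 0 := by
  rcases lt_or_ge h.totalDegree k with hk | hk
  · rw [homogeneousComponent_eq_zero _ h hk, contract_zero_left]
  rcases lt_or_ge d k with hdk | hdk
  · exact contract_eq_zero_of_lt (homogeneousComponent_isHomogeneous k h) hF hdk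
  -- now k ≤ d and k ≤ totalDegree
  have hdecomp : ∑ j ∈ Finset.range (h.totalDegree + 1),
      contract (homogeneousComponent j h) F = 0 := by
    rw [← contract_sum_left, sum_homogeneousComponent, hh]
  have happ := congrArg (homogeneousComponent (d - k)) hdecomp
  rw [map_sum, map_zero] at happ
  rw [Finset.sum_eq_single_of_mem k (Finset.mem_range.2 (by omega))] at happ
  · rw [← happ, homogeneousComponent_of_mem
      ((isHom_contract (homogeneousComponent_isHomogeneous k h) hF) :
        _ ∈ homogeneousSubmodule (Fin n) ℂ (d - k)), if_pos rfl]
  · intro j _ hjk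
    rcases lt_or_ge d j with hdj | hdj
    · rw [contract_eq_zero_of_lt (homogeneousComponent_isHomogeneous j h) hF hdj, map_zero]
    · rw [homogeneousComponent_of_mem
        ((isHom_contract (homogeneousComponent_isHomogeneous j h) hF) :
          _ ∈ homogeneousSubmodule (Fin n) ℂ (d - j)), if_neg (by omega)]

end ApolarityLemmas9

/-- For a homogeneous form `F` of degree `d ≥ 1`, the apolar ideal `F^⊥`
has a minimal generator of degree `d + 1` if and only if `F = c • ℓ^d` for a nonzero scalar
`c` and a nonzero linear form `ℓ`, i.e. iff `F` has Waring rank 1. -/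
theorem apolar_generator_degree_succ_iff_rank_one
    (n d : ℕ) (hd : 1 ≤ d) (F : MvPolynomial (Fin n) ℂ) (hF : F.IsHomogeneous d) :
    HasMinGenOfDegree (apolarIdeal F) (d + 1) ↔
    ∃ (c : ℂ) (ℓ : MvPolynomial (Fin n) ℂ),
      c ≠ 0 ∧ ℓ.IsHomogeneous 1 ∧ ℓ ≠ 0 ∧ F = c • ℓ ^ d := by
  constructor
  · rintro ⟨Θ₀, hΘ₀I, hΘ₀hom, hΘ₀not⟩
    -- `F` is nonzero
    have hF0 : F ≠ 0 := by
      rintro rfl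
      apply hΘ₀not
      have hI : apolarIdeal (0 : MvPolynomial (Fin n) ℂ) = ⊤ := by
        rw [Ideal.eq_top_iff_one]
        simp [mem_apolarIdeal]
      rw [hI, Ideal.mul_top, mem_irrIdeal_iff]
      rw [constantCoeff_eq]
      by_contra hc
      have := hΘ₀hom hc
      rw [map_zero] at this
      omega
    classical
    -- the span of products `X i * h` with `h` a degree-`d` element of the apolar ideal
    set W : Submodule ℂ (MvPolynomial (Fin n) ℂ) := Submodule.span ℂ
      {p | ∃ (i : Fin n) (h : MvPolynomial (Fin n) ℂ),
        h ∈ apolarIdeal F ∧ h.IsHomogeneous d ∧ p = X i * h} with hW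
    have hWle : W ≤ Submodule.restrictScalars ℂ (irrIdeal n * apolarIdeal F) := by
      rw [hW, Submodule.span_le]
      rintro p ⟨i, h, hI, hhom, rfl⟩
      exact Ideal.mul_mem_mul (Ideal.subset_span ⟨i, rfl⟩) hI
    have hΘ₀W : Θ₀ ∉ W := fun h => hΘ₀not (hWle h)
    obtain ⟨f, hfW, hfΘ₀⟩ := exists_functional W hΘ₀W
    obtain ⟨G, hGhom, hGrep⟩ := exists_pairing_rep (n := n) (d + 1) f
    have hPd : ∀ i, (pderiv i G).IsHomogeneous d := fun i => by
      simpa using IsHomogeneous.pderiv' hGhom i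
    -- elements of the apolar ideal of degree `d` annihilate the partials of `G`
    have hpair0 : ∀ (i : Fin n) (h : MvPolynomial (Fin n) ℂ), h ∈ apolarIdeal F →
        h.IsHomogeneous d → constantCoeff (contract h (pderiv i G)) = 0 := by
      intro i h hI hhom
      have hfzero : f (X i * h) = 0 :=
        hfW _ (Submodule.subset_span ⟨i, h, hI, hhom, rfl⟩)
      have hhomXh : (X i * h).IsHomogeneous (d + 1) := by
        have := (isHomogeneous_X ℂ i).mul hhom
        rwa [add_comm] at this
      have hrep := hGrep _ hhomXh
      rw [mul_comm (X i) h, contract_mul, contract_X] at hrep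
      rw [hrep, mul_comm h (X i)]
      exact hfzero
    -- a degree-`d` monomial pairing nontrivially with `F`
    obtain ⟨m₀, hm₀⟩ : ∃ m₀, coeff m₀ F ≠ 0 := ne_zero_iff.1 hF0
    have hm₀d : (Finsupp.weight 1) m₀ = d := hF hm₀
    set h₀ : MvPolynomial (Fin n) ℂ := monomial m₀ 1 with hh₀
    have hh₀hom : h₀.IsHomogeneous d := by
      apply isHomogeneous_monomial
      rw [show (Finsupp.degree m₀) = (Finsupp.weight 1) m₀ from
        DFunLike.congr_fun Finsupp.degree_eq_weight_one m₀]
      exact hm₀d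
    have hBh₀F : constantCoeff (contract h₀ F) ≠ 0 := by
      rw [hh₀, constantCoeff_contract_monomial d m₀ hm₀d F]
      refine mul_ne_zero ?_ hm₀
      rw [Nat.cast_ne_zero]
      exact Finset.prod_ne_zero_iff.2 fun i _ => Nat.factorial_ne_zero _
    -- each partial of `G` is a scalar multiple of `F`
    have hPF : ∀ i, ∃ cc : ℂ, pderiv i G = cc • F := by
      intro i
      set ci : ℂ := constantCoeff (contract h₀ (pderiv i G)) / constantCoeff (contract h₀ F)
        with hci
      refine ⟨ci, ?_⟩
      have hQhom : (pderiv i G - ci • F).IsHomogeneous d := by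
        exact (homogeneousSubmodule (Fin n) ℂ d).sub_mem (hPd i)
          ((homogeneousSubmodule (Fin n) ℂ d).smul_mem ci hF)
      have hQ0 : pderiv i G - ci • F = 0 := by
        apply homog_eq_zero_of_pairing d _ hQhom
        intro Θ hΘ
        set r : ℂ := constantCoeff (contract Θ F) / constantCoeff (contract h₀ F) with hr
        have hh' : (Θ - r • h₀) ∈ apolarIdeal F := by
          rw [mem_apolarIdeal, show Θ - r • h₀ = Θ + (-r) • h₀ by module,
            contract_add_left, contract_smul_left,
            contract_eq_C_pairing hΘ hF, contract_eq_C_pairing hh₀hom hF]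
          rw [smul_eq_C_mul, ← map_mul, ← map_add, C_eq_zero, hr]
          field_simp
          ring
        have hh'hom : (Θ - r • h₀).IsHomogeneous d :=
          (homogeneousSubmodule (Fin n) ℂ d).sub_mem hΘ
            ((homogeneousSubmodule (Fin n) ℂ d).smul_mem r hh₀hom)
        have h1 := hpair0 i _ hh' hh'hom
        rw [show Θ - r • h₀ = Θ + (-r) • h₀ by module, contract_add_left,
          contract_smul_left, map_add, constantCoeff_smul] at h1
        rw [contract_sub_right, contract_smul_right, map_sub, constantCoeff_smul]
        rw [hci]
        rw [hr] at h1
        simp only [smul_eq_mul] at h1 ⊢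
        field_simp at h1 ⊢
        linear_combination h1
      exact sub_eq_zero.mp hQ0
    choose cvec hcvec using hPF
    -- Euler's identity gives `G = ℓ * F`
    have hEuler : ((d : ℂ) + 1) • G = (∑ i : Fin n, cvec i • X i) * F := by
      have he := euler hGhom
      rw [Finset.sum_congr rfl (fun i _ => by rw [hcvec i])] at he
      have : ∑ i : Fin n, X i * cvec i • F = (∑ i : Fin n, cvec i • X i) * F := by
        rw [Finset.sum_mul]
        exact Finset.sum_congr rfl fun i _ => by
          rw [smul_mul_assoc, mul_smul_comm]
      rw [this] at he
      rw [show ((d : ℂ) + 1) = ((d + 1 : ℕ) : ℂ) by push_cast; ring,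
        Nat.cast_smul_eq_nsmul]
      exact he.symm
    set ℓ : MvPolynomial (Fin n) ℂ := ((d : ℂ) + 1)⁻¹ • ∑ i : Fin n, cvec i • X i with hℓ
    have hd1 : ((d : ℂ) + 1) ≠ 0 := Nat.cast_add_one_ne_zero d
    have hGℓF : G = ℓ * F := by
      rw [hℓ, smul_mul_assoc, ← hEuler, smul_smul, inv_mul_cancel₀ hd1, one_smul]
    have hG0 : G ≠ 0 := by
      intro h
      apply hfΘ₀
      rw [← hGrep Θ₀ hΘ₀hom, h, contract_zero_right, map_zero]
    have hℓ0 : ℓ ≠ 0 := fun h => hG0 (by rw [hGℓF, h, zero_mul])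
    have hℓhom : ℓ.IsHomogeneous 1 := by
      rw [hℓ]
      refine (homogeneousSubmodule (Fin n) ℂ 1).smul_mem _ ?_
      refine Submodule.sum_mem _ fun i _ => ?_
      exact (homogeneousSubmodule (Fin n) ℂ 1).smul_mem _ (isHomogeneous_X ℂ i)
    have hkey : ∀ i, ∃ μ : ℂ, ℓ * pderiv i F = C μ * F := by
      intro i
      refine ⟨cvec i - coeff (Finsupp.single i 1) ℓ, ?_⟩
      have h1 := hcvec i
      rw [hGℓF, pderiv_mul, pderiv_of_isHomogeneous_one hℓhom, smul_eq_C_mul] at h1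
      rw [map_sub]
      linear_combination h1
    obtain ⟨cc, hcc0, hccF⟩ := key_power ℓ hℓhom hℓ0 d F hF0 hF hkey
    exact ⟨cc, ℓ, hcc0, hℓhom, hℓ0, hccF⟩
  · rintro ⟨c, ℓ, hc, hℓ1, hℓ0, rfl⟩
    obtain ⟨i₀, ha⟩ := exists_single_coeff_ne_zero hℓ1 hℓ0
    have hpowd : (ℓ ^ d).IsHomogeneous d := by simpa using hℓ1.pow d
    have hpowd1 : (ℓ ^ (d + 1)).IsHomogeneous (d + 1) := by simpa using hℓ1.pow (d + 1)
    have hΘhom : (X i₀ ^ (d + 1) : MvPolynomial (Fin n) ℂ).IsHomogeneous (d + 1) :=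
      isHomogeneous_X_pow i₀ (d + 1)
    refine ⟨X i₀ ^ (d + 1), ?_, hΘhom, ?_⟩
    · rw [mem_apolarIdeal, contract_smul_right,
        contract_eq_zero_of_lt hΘhom hpowd (by omega), smul_zero]
    · intro hmem
      have hvan : ∀ x ∈ irrIdeal n * apolarIdeal (c • ℓ ^ d),
          constantCoeff (contract x (ℓ ^ (d + 1))) = 0 := by
        intro x hx
        refine Submodule.mul_induction_on hx ?_ ?_
        · intro β hβ h hh
          have hhl : contract h (ℓ ^ d) = 0 := by
            have h' : contract h (c • ℓ ^ d) = 0 := hh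
            rw [contract_smul_right] at h'
            exact (smul_eq_zero.mp h').resolve_left hc
          have hQ0 : (contract h (ℓ ^ (d + 1))).IsHomogeneous 0 := by
            have hsum : contract h (ℓ ^ (d + 1)) = ∑ j ∈ Finset.range (h.totalDegree + 1),
                contract (homogeneousComponent j h) (ℓ ^ (d + 1)) := by
              conv_lhs => rw [← sum_homogeneousComponent h]
              rw [contract_sum_left]
            rw [hsum]
            apply IsHomogeneous.sum
            intro j _
            rcases le_or_gt j d with hjd | hjd
            · have hcomp0 : contract (homogeneousComponent j h) (ℓ ^ d) = 0 :=
                homogeneousComponent_contract_eq_zero hpowd hhl j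
              have heval : eval (fun i => coeff (Finsupp.single i 1) ℓ)
                  (homogeneousComponent j h) = 0 := by
                rw [contract_homog_pow_linear hℓ1 hjd
                  (homogeneousComponent_isHomogeneous j h)] at hcomp0
                rcases smul_eq_zero.mp hcomp0 with h1 | h1
                · exfalso
                  rw [Nat.cast_eq_zero, Nat.descFactorial_eq_zero_iff_lt] at h1
                  omega
                rcases smul_eq_zero.mp h1 with h2 | h2
                · exact h2
                · exact absurd h2 (pow_ne_zero _ hℓ0)
              rw [contract_homog_pow_linear hℓ1 (by omega : j ≤ d + 1)
                (homogeneousComponent_isHomogeneous j h), heval, zero_smul, smul_zero]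
              exact (homogeneousSubmodule (Fin n) ℂ 0).zero_mem
            · have h3 := isHom_contract (homogeneousComponent_isHomogeneous j h) hpowd1
              rwa [Nat.sub_eq_zero_of_le (by omega)] at h3
          rw [contract_mul, IsHomogeneous.eq_C_constantCoeff' hQ0,
            show (C (constantCoeff (contract h (ℓ ^ (d + 1))))
                : MvPolynomial (Fin n) ℂ)
              = constantCoeff (contract h (ℓ ^ (d + 1))) • (1 : MvPolynomial (Fin n) ℂ) by
              rw [smul_eq_C_mul, mul_one],
            contract_smul_right, constantCoeff_smul, contract_one_right,
            mem_irrIdeal_iff.1 hβ]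
          simp
        · intro x y hx hy
          rw [contract_add_left, map_add, hx, hy, add_zero]
      have hz := hvan _ hmem
      rw [contract_homog_pow_linear hℓ1 (le_refl (d + 1)) hΘhom, Nat.sub_self, pow_zero,
        Nat.descFactorial_self, constantCoeff_smul, constantCoeff_smul, map_one, map_pow,
        eval_X] at hz
      simp only [smul_eq_mul, mul_one] at hz
      rcases mul_eq_zero.mp hz with h1 | h1
      · rw [Nat.cast_eq_zero] at h1
        exact Nat.factorial_ne_zero _ h1
      · exact pow_ne_zero _ ha h1
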